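/- There exist qubit states ρ₁, ρ₂ for which the coarse-graining map strictly increases trace distance: taking ρ₁ with Bloch vector (0,0,1) and ρ₂ with Bloch vector (0,0,1/2), one has D(ρ₁,ρ₂) = 1/4, while D(λ(ρ₁⊗ρ₁), λ(ρ₂⊗ρ₂)) = 7/16 > 1/4, where λ(ρ⊗ρ) = diag( ¼(1 + r_z)², ¼(1 − r_z)² + ½(1 − r_z²) ) with r_z the z-Bloch component of ρ. -/

import Mathlib

open Matrix Complex ComplexOrder

abbrev Mat (d : ℕ) := Matrix (Fin d) (Fin d) ℂ

/-- The extension `I_n ⊗ Λ` of a matrix map `Λ` by the identity on a first tensor factor. -/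
def matExt {α β : Type*} [Fintype α] [Fintype β] (n : ℕ)
    (Λ : Matrix α α ℂ → Matrix β β ℂ)
    (A : Matrix (Fin n × α) (Fin n × α) ℂ) :
    Matrix (Fin n × β) (Fin n × β) ℂ :=
  fun p q => Λ (fun k l => A (p.1, k) (q.1, l)) p.2 q.2

/-- The extension `Λ ⊗ I` of a matrix map `Λ` by the identity on a second tensor factor. -/
def extSecond {α β : Type*} [Fintype α] [Fintype β] (n : ℕ)
    (Λ : Matrix α α ℂ → Matrix β β ℂ)
    (A : Matrix (α × Fin n) (α × Fin n) ℂ) :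
    Matrix (β × Fin n) (β × Fin n) ℂ :=
  fun p q => Λ (fun k l => A (k, p.2) (l, q.2)) p.1 q.1

/-- A matrix map is positive if it preserves positive semidefiniteness. -/
def IsPosMap {α β : Type*} [Fintype α] [Fintype β]
    (Λ : Matrix α α ℂ → Matrix β β ℂ) : Prop :=
  ∀ A, A.PosSemidef → (Λ A).PosSemidef

/-- Complete positivity: every identity extension preserves positive semidefiniteness. -/
def IsCP {α β : Type*} [Fintype α] [Fintype β]
    (Λ : Matrix α α ℂ → Matrix β β ℂ) : Prop :=
  ∀ (n : ℕ) (A : Matrix (Fin n × α) (Fin n × α) ℂ),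
    A.PosSemidef → (matExt n Λ A).PosSemidef

/-- Trace preservation. -/
def IsTP {α β : Type*} [Fintype α] [Fintype β]
    (Λ : Matrix α α ℂ → Matrix β β ℂ) : Prop :=
  ∀ A, (Λ A).trace = A.trace

def IsCPTP {α β : Type*} [Fintype α] [Fintype β]
    (Λ : Matrix α α ℂ → Matrix β β ℂ) : Prop :=
  IsCP Λ ∧ IsTP Λ

/-- The positive semidefinite square root (the former `Matrix.PosSemidef.sqrt`). -/
noncomputable def psdSqrt {n : Type*} [Fintype n] [DecidableEq n] {A : Matrix n n ℂ}
    (hA : A.PosSemidef) : Matrix n n ℂ :=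
  (hA.1.eigenvectorUnitary : Matrix n n ℂ) *
    diagonal (fun i => ((Real.sqrt (hA.1.eigenvalues i) : ℝ) : ℂ)) *
    (star hA.1.eigenvectorUnitary : Matrix n n ℂ)

/-- The trace norm `‖A‖₁ = Tr √(AᴴA)`. -/
noncomputable def traceNorm {m : Type*} [Fintype m] [DecidableEq m] (A : Matrix m m ℂ) : ℝ :=
  ((psdSqrt (Matrix.posSemidef_conjTranspose_mul_self A)).trace).re

/-- The `n`-fold tensor power `Λ^{⊗n}` of a linear matrix map. -/
noncomputable def tensorPow {d : ℕ} (n : ℕ) (Λ : Mat d → Mat d)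
    (A : Matrix (Fin n → Fin d) (Fin n → Fin d) ℂ) :
    Matrix (Fin n → Fin d) (Fin n → Fin d) ℂ :=
  fun p q => ∑ i : Fin n → Fin d, ∑ j : Fin n → Fin d,
    A i j * ∏ k, Λ (Matrix.single (i k) (j k) 1) (p k) (q k)

/-- The (normalized) Choi matrix `(I ⊗ Λ)(|φ₊⟩⟨φ₊|)`. -/
noncomputable def choi {d : ℕ} (Λ : Mat d → Mat d) :
    Matrix (Fin d × Fin d) (Fin d × Fin d) ℂ :=
  fun p q => (1 / (d : ℂ)) * Λ (Matrix.single p.1 q.1 1) p.2 q.2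

noncomputable def σX : Mat 2 := !![0, 1; 1, 0]
noncomputable def σY : Mat 2 := !![0, -Complex.I; Complex.I, 0]
noncomputable def σZ : Mat 2 := !![1, 0; 0, -1]

/-- The single-collision channel Λ₁. -/
noncomputable def Lam1 (ε : ℝ) (ρ : Mat 2) : Mat 2 :=
  ((1 - 2*ε : ℝ) : ℂ) • ρ + ((ε : ℝ) : ℂ) • (σZ * ρ * σZ + σX * ρ * σX)

/-- The two-collision channel Λ₂. -/
noncomputable def Lam2 (ε : ℝ) (ρ : Mat 2) : Mat 2 :=
  (((1 - 2*ε)^2 + 4*ε^2 : ℝ) : ℂ) • ρ +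
    ((2*ε*(1 - 2*ε) : ℝ) : ℂ) • (σZ * ρ * σZ + σX * ρ * σX)

/-- A general qubit Pauli map. -/
noncomputable def pauliMap (q0 qx qy qz : ℝ) (ρ : Mat 2) : Mat 2 :=
  (q0 : ℂ) • ρ + (qx : ℂ) • (σX * ρ * σX) + (qy : ℂ) • (σY * ρ * σY) + (qz : ℂ) • (σZ * ρ * σZ)

/-- The qubit state with Bloch vector `(x, y, z)`. -/
noncomputable def bloch (x y z : ℝ) : Mat 2 :=
  (1/2 : ℂ) • !![1 + (z : ℂ), (x : ℂ) - Complex.I * (y : ℂ);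
                 (x : ℂ) + Complex.I * (y : ℂ), 1 - (z : ℂ)]

/-- The coarse-grained state `λ(ρ ⊗ ρ)` of a qubit with Bloch `z`-component `rz`. -/
noncomputable def cg (rz : ℝ) : Mat 2 :=
  !![(((1 + rz)^2 / 4 : ℝ) : ℂ), 0;
     0, (((1 - rz)^2 / 4 + (1 - rz^2) / 2 : ℝ) : ℂ)]



lemma traceNorm_diag_neg (a : ℝ) (ha : 0 ≤ a) (A : Mat 2)
    (hA : A = !![(-(a:ℂ)), 0; 0, (a:ℂ)]) : traceNorm A = 2 * a := by
  have hBd : !![(a:ℂ), 0; 0, (a:ℂ)] = Matrix.diagonal ![(a:ℂ), (a:ℂ)] := by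
    ext i j; fin_cases i <;> fin_cases j <;> simp [Matrix.diagonal]
  have hBpsd : Matrix.PosSemidef (!![(a:ℂ), 0; 0, (a:ℂ)]) := by
    rw [hBd]
    refine Matrix.PosSemidef.diagonal ?_
    intro i; fin_cases i <;> simpa using Complex.zero_le_real.mpr ha
  have hsq : (!![(a:ℂ), 0; 0, (a:ℂ)]) ^ 2 = Aᴴ * A := by
    subst hA
    ext i j
    fin_cases i <;> fin_cases j <;>
      simp [pow_two, Matrix.mul_apply, Fin.sum_univ_two, Matrix.conjTranspose_apply]
  have hsqrt : !![(a:ℂ), 0; 0, (a:ℂ)] = psdSqrt (Matrix.posSemidef_conjTranspose_mul_self A) := by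
    have hH : Aᴴ * A = algebraMap ℝ (Mat 2) (a ^ 2) := by
      rw [← hsq]; ext i j
      fin_cases i <;> fin_cases j <;> simp [pow_two, Matrix.mul_apply, Fin.sum_univ_two, Matrix.algebraMap_matrix_apply]
    have e : psdSqrt (Matrix.posSemidef_conjTranspose_mul_self A) = cfc Real.sqrt (Aᴴ * A) := by
      rw [(Matrix.posSemidef_conjTranspose_mul_self A).1.cfc_eq]
      simp [psdSqrt, Matrix.IsHermitian.cfc, Function.comp_def]
    rw [e, hH, cfc_algebraMap, Real.sqrt_sq ha]
    ext i j
    fin_cases i <;> fin_cases j <;> simp [Matrix.algebraMap_matrix_apply]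
  rw [traceNorm, ← hsqrt]
  simp [Matrix.trace, Fin.sum_univ_two]
  ring

/-- for the qubit states with Bloch vectors `(0,0,1)` and `(0,0,1/2)`, the
coarse-graining map strictly increases the trace distance: from `1/4` to `7/16`. -/
theorem coarse_graining_can_increase_distinguishability :
    (1/2 : ℝ) * traceNorm (bloch 0 0 (1/2) - bloch 0 0 1) = 1/4 ∧
    (1/2 : ℝ) * traceNorm (cg (1/2) - cg 1) = 7/16 ∧
    (1/2 : ℝ) * traceNorm (bloch 0 0 (1/2) - bloch 0 0 1)
      < (1/2 : ℝ) * traceNorm (cg (1/2) - cg 1) := by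
  have h1 : traceNorm (bloch 0 0 (1/2) - bloch 0 0 1) = 2 * (1/4 : ℝ) := by
    apply traceNorm_diag_neg (1/4) (by norm_num)
    ext i j
    fin_cases i <;> fin_cases j <;> simp [bloch] <;> norm_num
  have h2 : traceNorm (cg (1/2) - cg 1) = 2 * (7/16 : ℝ) := by
    apply traceNorm_diag_neg (7/16) (by norm_num)
    ext i j
    fin_cases i <;> fin_cases j <;> simp [cg] <;> norm_num
  refine ⟨by rw [h1]; norm_num, by rw [h2]; norm_num, by rw [h1, h2]; norm_num⟩
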